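/- Every weighted tree T on n vertices admits an exact 2-hopset with O(n log n) edges. Concretely: recursively choosing a centroid-type separator and connecting every vertex in each part to the separator vertices on its root path yields a 2-hopset H of T with |H| ≤ c · n log₂ n for an absolute constant c. -/

import Mathlib

open scoped ENNReal

noncomputable section

open Classical in
/-- `dLim w h u v` : minimum total weight of a `u`-`v` walk using at most `h` edges,
where `w x y` is the weight of edge `{x,y}` (`⊤` if absent). -/
def dLim {V : Type*} (w : V → V → ℝ≥0∞) : ℕ → V → V → ℝ≥0∞
  | 0, u, v => if u = v then (0 : ℝ≥0∞) else ⊤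
  | h + 1, u, v => min (dLim w h u v) (⨅ x : V, w u x + dLim w h x v)

/-- Ordinary shortest-path distance: infimum over all hop bounds. -/
def gdist {V : Type*} (w : V → V → ℝ≥0∞) (u v : V) : ℝ≥0∞ :=
  ⨅ h : ℕ, dLim w h u v

open Classical in
/-- Edge weights of the augmented graph `G ∪ H`: a shortcut pair of `H` gets
weight `d_G(u,v)`, other pairs keep their original weight. -/
def wAug {V : Type*} (w : V → V → ℝ≥0∞) (H : V → V → Prop) (u v : V) : ℝ≥0∞ :=
  if H u v then min (w u v) (gdist w u v) else w u v

/-- `H` is an exact `h`-hopset for the graph with weights `w`. -/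
def IsHopset {V : Type*} (w : V → V → ℝ≥0∞) (H : V → V → Prop) (h : ℕ) : Prop :=
  ∀ u v : V, dLim (wAug w H) h u v = gdist w u v

variable {V : Type*} (w : V → V → ℝ≥0∞)

lemma dLim_zero_self (u : V) : dLim w 0 u u = 0 := by simp [dLim]

lemma dLim_succ (h : ℕ) (u v : V) :
    dLim w (h+1) u v = min (dLim w h u v) (⨅ x : V, w u x + dLim w h x v) := rfl

lemma gdist_le_dLim (h : ℕ) (u v : V) : gdist w u v ≤ dLim w h u v := iInf_le _ h

lemma gdist_self (u : V) : gdist w u u = 0 :=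
  le_antisymm ((gdist_le_dLim w 0 u u).trans_eq (dLim_zero_self w u)) (zero_le ..)

lemma dLim_succ_le (h : ℕ) (u v : V) : dLim w (h+1) u v ≤ dLim w h u v := min_le_left _ _

lemma dLim_le_dLim {a b : ℕ} (hab : a ≤ b) (u v : V) : dLim w b u v ≤ dLim w a u v := by
  induction b with
  | zero => simp_all
  | succ n ih =>
    rcases Nat.lt_or_ge a (n+1) with h | h
    · exact (dLim_succ_le w n u v).trans (ih (Nat.lt_succ_iff.mp h))
    · have : a = n + 1 := le_antisymm hab h
      simp [this]

lemma dLim_le_edge (u v : V) : dLim w 1 u v ≤ w u v := by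
  calc dLim w 1 u v ≤ ⨅ x : V, w u x + dLim w 0 x v := min_le_right _ _
    _ ≤ w u v + dLim w 0 v v := iInf_le _ v
    _ = w u v := by rw [dLim_zero_self, add_zero]

lemma gdist_le_edge (u v : V) : gdist w u v ≤ w u v :=
  (gdist_le_dLim w 1 u v).trans (dLim_le_edge w u v)

lemma dLim_triangle (a b : ℕ) (u x v : V) :
    dLim w (a + b) u v ≤ dLim w a u x + dLim w b x v := by
  induction a generalizing u with
  | zero =>
    rcases eq_or_ne u x with rfl | hne
    · simp [dLim_zero_self, Nat.zero_add]
    · simp [dLim, hne]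
  | succ n ih =>
    have hrw : n + 1 + b = (n + b) + 1 := by omega
    rw [hrw, dLim_succ w n, ← min_add_add_right]
    refine le_min ?_ ?_
    · exact ((dLim_succ_le w (n+b) u v)).trans (ih u)
    · refine (min_le_right _ _).trans ?_
      rw [ENNReal.iInf_add]
      refine iInf_mono fun y => ?_
      rw [add_assoc]
      exact add_le_add_right (ih y) _

lemma gdist_triangle (u x v : V) : gdist w u v ≤ gdist w u x + gdist w x v := by
  unfold gdist
  rw [ENNReal.iInf_add]
  refine le_iInf fun a => ?_
  rw [ENNReal.add_iInf]
  refine le_iInf fun b => ?_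
  exact (iInf_le _ (a+b)).trans (dLim_triangle w a b u x v)

lemma wAug_ge_gdist (H : V → V → Prop) (u v : V) : gdist w u v ≤ wAug w H u v := by
  unfold wAug
  split
  · exact le_min (gdist_le_edge w u v) le_rfl
  · exact gdist_le_edge w u v

lemma wAug_le_gdist_of_H (H : V → V → Prop) {u v : V} (h : H u v) :
    wAug w H u v ≤ gdist w u v := by
  unfold wAug
  rw [if_pos h]
  exact min_le_right _ _

/-- lower bound: hopset distances never undershoot true distances -/
lemma dLim_wAug_ge (H : V → V → Prop) (h : ℕ) (u v : V) :
    gdist w u v ≤ dLim (wAug w H) h u v := by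
  induction h generalizing u with
  | zero =>
    rcases eq_or_ne u v with rfl | hne
    · simp [dLim_zero_self, gdist_self]
    · simp [dLim, hne]
  | succ n ih =>
    refine le_min (ih u) (le_iInf fun x => ?_)
    calc gdist w u v ≤ gdist w u x + gdist w x v := gdist_triangle w u x v
      _ ≤ wAug w H u x + dLim (wAug w H) n x v :=
          add_le_add (wAug_ge_gdist w H u x) (ih x)

/-- potential-function lower bound on `dLim` -/
lemma dLim_ge_potential (f : V → ℝ≥0∞) (v : V) (hfv : f v = 0)
    (hstep : ∀ a b : V, f a ≤ w a b + f b) (h : ℕ) (u : V) :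
    f u ≤ dLim w h u v := by
  induction h generalizing u with
  | zero =>
    rcases eq_or_ne u v with rfl | hne
    · simp [dLim_zero_self, hfv]
    · simp [dLim, hne]
  | succ n ih =>
    refine le_min (ih u) (le_iInf fun x => ?_)
    exact (hstep u x).trans (add_le_add_right (ih x) _)

section Graph

variable {V : Type*} (G : SimpleGraph V)

/-- `G` with vertex `x` isolated. -/
def Gdel (x : V) : SimpleGraph V where
  Adj a b := G.Adj a b ∧ a ≠ x ∧ b ≠ x
  symm := ⟨fun a b ⟨h, ha, hb⟩ => ⟨h.symm, hb, ha⟩⟩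
  loopless := ⟨fun a h => G.irrefl h.1⟩

lemma Gdel_le (x : V) : Gdel G x ≤ G := fun _ _ h => h.1

lemma Gdel_not_mem_support {x u v : V} (W : (Gdel G x).Walk u v) (hu : u ≠ x) :
    x ∉ W.support := by
  induction W with
  | nil => simpa using (Ne.symm hu)
  | cons h p ih =>
    rw [SimpleGraph.Walk.support_cons]
    intro hx
    rcases List.mem_cons.mp hx with hx | hx
    · exact hu hx.symm
    · exact ih h.2.2 hx

lemma Gdel_reach_start {x v : V} (h : (Gdel G x).Reachable x v) : x = v := by
  obtain ⟨W⟩ := h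
  cases W with
  | nil => rfl
  | cons h p => exact absurd rfl h.2.1

lemma not_reachable_of_mem_path (htree : G.IsTree) {u v x : V}
    (P : G.Walk u v) (hP : P.IsPath) (hx : x ∈ P.support) (hxu : x ≠ u) (hxv : x ≠ v) :
    ¬ (Gdel G x).Reachable u v := by
  classical
  rintro ⟨W⟩
  have hW' : ∀ e ∈ W.edges, e ∈ G.edgeSet := fun e he =>
    SimpleGraph.edgeSet_mono (Gdel_le G x) (W.edges_subset_edgeSet he)
  set W' : G.Walk u v := W.transfer G hW' with hW'def
  have hsupp : W'.support = W.support := W.support_transfer hW'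
  have hxW : x ∉ W.support := Gdel_not_mem_support G W (Ne.symm hxu)
  have huniq := htree.existsUnique_path u v
  have hPeq : P = W'.bypass := huniq.unique hP W'.bypass_isPath
  have : x ∈ W'.support := W'.support_bypass_subset (hPeq ▸ hx)
  rw [hsupp] at this
  exact hxW this

end Graph

section Split

variable {V : Type*}

open Classical in
lemma gdist_split (G : SimpleGraph V) (w : V → V → ℝ≥0∞)
    (hw3 : ∀ u v : V, u ≠ v → (w u v ≠ ⊤ ↔ G.Adj u v))
    {u v x : V} (hsep : ¬ (Gdel G x).Reachable u v) :
    gdist w u x + gdist w x v ≤ gdist w u v := by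
  set f : V → ℝ≥0∞ := fun a =>
    if (Gdel G x).Reachable a v then gdist w a v else gdist w a x + gdist w x v with hf
  have hfv : f v = 0 := by simp [hf, SimpleGraph.Reachable.refl, gdist_self]
  have hstep : ∀ a b : V, f a ≤ w a b + f b := by
    intro a b
    by_cases hab : w a b = ⊤
    · simp [hab]
    rcases eq_or_ne a b with rfl | hne
    · exact le_add_self
    have hadj : G.Adj a b := (hw3 a b hne).mp hab
    by_cases ra : (Gdel G x).Reachable a v
    · by_cases rb : (Gdel G x).Reachable b v
      · simp only [hf, if_pos ra, if_pos rb]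
        exact (gdist_triangle w a b v).trans (add_le_add_left (gdist_le_edge w a b) _)
      · simp only [hf, if_pos ra, if_neg rb]
        calc gdist w a v ≤ gdist w a b + gdist w b v := gdist_triangle w a b v
          _ ≤ w a b + (gdist w b x + gdist w x v) :=
            add_le_add (gdist_le_edge w a b) (gdist_triangle w b x v)
    · by_cases rb : (Gdel G x).Reachable b v
      · -- hard case
        rcases eq_or_ne b x with rfl | hbx
        · have hxv : b = v := Gdel_reach_start G rb
          subst hxv
          simp only [hf, if_neg ra, if_pos rb, gdist_self, add_zero]
          exact gdist_le_edge w a b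
        rcases eq_or_ne a x with rfl | hax
        · simp only [hf, if_neg ra, if_pos rb, gdist_self, zero_add]
          exact (gdist_triangle w a b v).trans (add_le_add_left (gdist_le_edge w a b) _)
        · exact absurd (((Gdel G x).adj_symm ⟨hadj.symm, hbx, hax⟩).reachable.trans rb) ra
      · simp only [hf, if_neg ra, if_neg rb, ← add_assoc]
        exact add_le_add_left
          ((gdist_triangle w a b x).trans (add_le_add_left (gdist_le_edge w a b) _)) _
  have hfu : f u = gdist w u x + gdist w x v := by simp [hf, if_neg hsep]
  rw [← hfu]
  exact le_iInf fun h => dLim_ge_potential w f v hfv hstep h u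

end Split

section RS

open scoped Classical

variable {V : Type*} (G : SimpleGraph V)

/-- connectivity within a finite vertex set `S` -/
def RS (S : Finset V) : V → V → Prop :=
  Relation.ReflTransGen (fun p q => G.Adj p q ∧ p ∈ S ∧ q ∈ S)

lemma RS_symm {S : Finset V} : Symmetric (RS G S) :=
  by
    intro a b h
    haveI : Std.Symm (fun p q : V => G.Adj p q ∧ p ∈ S ∧ q ∈ S) :=
      ⟨fun _ _ h => ⟨h.1.symm, h.2.2, h.2.1⟩⟩
    exact Relation.ReflTransGen.stdSymm.symm a b h

lemma RS_trans {S : Finset V} {a b c : V} (h1 : RS G S a b) (h2 : RS G S b c) :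
    RS G S a c := h1.trans h2

lemma RS_mono {S S' : Finset V} (hss : S ⊆ S') {a b : V} (h : RS G S a b) :
    RS G S' a b :=
  by
    unfold RS at h ⊢
    induction h with
    | refl => exact .refl
    | tail _ hr ih => exact ih.tail ⟨hr.1, hss hr.2.1, hss hr.2.2⟩

lemma RS_of_walk {S : Finset V} {u v : V} (W : G.Walk u v)
    (hW : ∀ z ∈ W.support, z ∈ S) : RS G S u v := by
  induction W with
  | nil => exact .refl
  | @cons a b c h p ih =>
    refine Relation.ReflTransGen.head ⟨h, ?_, ?_⟩ (ih fun z hz => hW z ?_)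
    · exact hW a (by simp)
    · exact hW b (by simp [SimpleGraph.Walk.support_cons, p.start_mem_support])
    · simp [SimpleGraph.Walk.support_cons, hz]

lemma RS_mem_right {S : Finset V} {a b : V} (h : RS G S a b) (hne : a ≠ b) : b ∈ S := by
  rcases (Relation.ReflTransGen.cases_tail h) with rfl | ⟨c, _, hr⟩
  · exact absurd rfl hne
  · exact hr.2.2

open Classical in
/-- the `S`-connectivity class of `y` inside `S` -/
noncomputable def cls (S : Finset V) (y : V) : Finset V := S.filter (fun z => RS G S y z)

lemma mem_cls {S : Finset V} {y z : V} : z ∈ cls G S y ↔ z ∈ S ∧ RS G S y z := by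
  classical
  simp [cls]

lemma self_mem_cls {S : Finset V} {y : V} (hy : y ∈ S) : y ∈ cls G S y :=
  mem_cls G |>.mpr ⟨hy, .refl⟩

lemma cls_eq_of_mem {S : Finset V} {y y' : V} (h : y' ∈ cls G S y) :
    cls G S y' = cls G S y := by
  obtain ⟨_, hr⟩ := (mem_cls G).mp h
  ext z
  simp only [mem_cls]
  exact and_congr_right fun _ =>
    ⟨fun h2 => hr.trans h2, fun h2 => (RS_symm G hr).trans h2⟩

lemma RS_to_cls {S : Finset V} {a b : V} (h : RS G S a b) :
    RS G (cls G S a) a b := by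
  classical
  induction h with
  | refl => exact .refl
  | @tail b c hab hbc ih =>
    exact ih.tail ⟨hbc.1, (mem_cls G).mpr ⟨hbc.2.1, hab⟩,
      (mem_cls G).mpr ⟨hbc.2.2, hab.tail hbc⟩⟩

lemma RS_first_hit {S : Finset V} {u x : V} (h : RS G S u x) :
    u ≠ x → ∃ p, G.Adj p x ∧ p ∈ S.erase x ∧ RS G (S.erase x) u p := by
  classical
  induction h using Relation.ReflTransGen.head_induction_on with
  | refl => exact fun h => absurd rfl h
  | @head a c h' hrt ih =>
    intro hax
    rcases eq_or_ne c x with rfl | hcx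
    · exact ⟨a, h'.1, Finset.mem_erase.mpr ⟨hax, h'.2.1⟩, .refl⟩
    · obtain ⟨p, hp1, hp2, hp3⟩ := ih hcx
      exact ⟨p, hp1, hp2, Relation.ReflTransGen.head
        ⟨h'.1, Finset.mem_erase.mpr ⟨hax, h'.2.1⟩, Finset.mem_erase.mpr ⟨hcx, h'.2.2⟩⟩ hp3⟩

lemma RS_to_walk {S : Finset V} {p q : V} (h : RS G S p q) (hne : p ≠ q) :
    ∃ W : G.Walk p q, ∀ z ∈ W.support, z ∈ S := by
  induction h with
  | refl => exact absurd rfl hne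
  | @tail b c hab hbc ih =>
    rcases eq_or_ne p b with rfl | hpb
    · refine ⟨SimpleGraph.Walk.cons hbc.1 SimpleGraph.Walk.nil, ?_⟩
      intro z hz
      simp only [SimpleGraph.Walk.support_cons, SimpleGraph.Walk.support_nil,
        List.mem_cons, List.mem_singleton] at hz
      rcases hz with rfl | hz
      · exact hbc.2.1
      · rcases hz with rfl | h; exacts [hbc.2.2, absurd h List.not_mem_nil]
    · obtain ⟨W, hW⟩ := ih hpb
      refine ⟨W.concat hbc.1, ?_⟩
      intro z hz
      rw [SimpleGraph.Walk.support_concat] at hz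
      rcases List.mem_append.mp hz with hz | hz
      · exact hW z hz
      · rcases List.mem_singleton.mp hz with rfl
        exact hbc.2.2

/-- in a tree, a connected set avoiding `x` contains at most one neighbour of `x` -/
lemma unique_nbr (htree : G.IsTree) {S' : Finset V} {x p q : V}
    (hp : G.Adj p x) (hq : G.Adj q x) (hr : RS G S' p q) (hS : x ∉ S') : p = q := by
  classical
  by_contra hne
  obtain ⟨W, hW⟩ := RS_to_walk G hr hne
  have hxW : x ∉ W.support := fun h => hS (hW x h)
  have hB : W.bypass.IsPath := W.bypass_isPath
  have hP2 : (SimpleGraph.Walk.cons hp (SimpleGraph.Walk.cons hq.symm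
      SimpleGraph.Walk.nil)).IsPath := by
    simp [SimpleGraph.Walk.isPath_def, hp.ne, hq.ne', hne, Ne.symm hne]
  have huniq := htree.existsUnique_path p q
  have hEq : W.bypass = SimpleGraph.Walk.cons hp (SimpleGraph.Walk.cons hq.symm
      SimpleGraph.Walk.nil) := huniq.unique hB hP2
  have : x ∈ W.bypass.support := by
    rw [hEq]; simp
  exact hxW (W.support_bypass_subset this)

end RS

section Centroid

open scoped Classical

variable {V : Type*} (G : SimpleGraph V)

lemma centroid_exists (htree : G.IsTree) (S : Finset V)
    (hconn : ∀ a ∈ S, ∀ b ∈ S, RS G S a b) (h2 : 2 ≤ S.card) :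
    ∃ x ∈ S, ∀ y ∈ S.erase x, 2 * (cls G (S.erase x) y).card ≤ S.card := by
  set n := S.card with hn
  set m : V → ℕ := fun x => (S.erase x).sup (fun y => (cls G (S.erase x) y).card) with hm
  have hSne : S.Nonempty := Finset.card_pos.mp (by omega)
  obtain ⟨x, hxS, hxmin⟩ := S.exists_min_image m hSne
  refine ⟨x, hxS, ?_⟩
  by_contra hbad
  push_neg at hbad
  obtain ⟨y, hyS, hyC⟩ := hbad
  set C : Finset V := cls G (S.erase x) y with hC
  have hyx : y ≠ x := (Finset.mem_erase.mp hyS).1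
  have hyS' : y ∈ S := (Finset.mem_erase.mp hyS).2
  have hyC' : y ∈ C := self_mem_cls G hyS
  have hCpos : 0 < C.card := Finset.card_pos.mpr ⟨y, hyC'⟩
  have hCsub : C ⊆ S.erase x := Finset.filter_subset _ _
  -- find neighbour z of x inside C
  obtain ⟨z, hz1, hz2, hz3⟩ := RS_first_hit G (hconn y hyS' x hxS) hyx
  have hzC : z ∈ C := (mem_cls G).mpr ⟨hz2, hz3⟩
  have hzx : z ≠ x := (Finset.mem_erase.mp hz2).1
  have hzS : z ∈ S := (Finset.mem_erase.mp hz2).2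
  have hCle : C.card ≤ m x := Finset.le_sup (f := fun y => (cls G (S.erase x) y).card) hyS
  -- every class of S.erase z has card < C.card
  have hkey : ∀ w ∈ S.erase z, (cls G (S.erase z) w).card < C.card := by
    intro w hw
    set D : Finset V := cls G (S.erase z) w with hD
    have hDsub : D ⊆ S.erase z := Finset.filter_subset _ _
    by_cases hx : x ∈ D
    · -- D avoids C.erase z
      have hdisj : ∀ d ∈ D, d ∉ C.erase z := by
        intro d hd hdCz
        have hdC : d ∈ C := (Finset.mem_erase.mp hdCz).2
        have hdz : d ≠ z := (Finset.mem_erase.mp hdCz).1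
        have hdx : d ≠ x := (Finset.mem_erase.mp (hCsub hdC)).1
        have hrdx : RS G (S.erase z) d x :=
          (RS_symm G ((mem_cls G).mp hd).2).trans ((mem_cls G).mp hx).2
        obtain ⟨p, hp1, hp2, hp3⟩ := RS_first_hit G hrdx hdx
        have hpz : p ≠ z := (Finset.mem_erase.mp ((Finset.mem_erase.mp hp2).2)).1
        have hsub2 : (S.erase z).erase x ⊆ S.erase x := by
          intro e he
          exact Finset.mem_erase.mpr ⟨(Finset.mem_erase.mp he).1,
            (Finset.mem_erase.mp ((Finset.mem_erase.mp he).2)).2⟩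
        have hpC : p ∈ C := by
          have : RS G (S.erase x) d p := RS_mono G hsub2 hp3
          refine (mem_cls G).mpr ⟨hsub2 hp2, ?_⟩
          exact (((mem_cls G).mp hdC).2).trans this
        have : RS G (S.erase x) z p :=
          (RS_symm G ((mem_cls G).mp hzC).2).trans (((mem_cls G).mp hpC).2)
        exact hpz (unique_nbr G htree hp1 hz1 (RS_symm G this)
          (fun h => (Finset.mem_erase.mp h).1 rfl))
      have hDsub2 : D ⊆ (S.erase z) \ (C.erase z) := by
        intro d hd
        exact Finset.mem_sdiff.mpr ⟨hDsub hd, hdisj d hd⟩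
      have hCzsub : C.erase z ⊆ S.erase z := by
        intro e he
        exact Finset.mem_erase.mpr ⟨(Finset.mem_erase.mp he).1,
          (Finset.mem_erase.mp (hCsub (Finset.mem_erase.mp he).2)).2⟩
      have hcard := Finset.card_le_card hDsub2
      rw [Finset.card_sdiff_of_subset hCzsub] at hcard
      have e1 : (S.erase z).card = n - 1 := by rw [Finset.card_erase_of_mem hzS]
      have e2 : (C.erase z).card = C.card - 1 := by rw [Finset.card_erase_of_mem hzC]
      have hCn : C.card ≤ n := le_trans (Finset.card_le_card hCsub) (by
        rw [Finset.card_erase_of_mem hxS]; omega)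
      omega
    · -- D ⊆ C.erase z
      have hDsub2 : D ⊆ C.erase z := by
        intro d hd
        have hdz : d ≠ z := (Finset.mem_erase.mp (hDsub hd)).1
        have hdS : d ∈ S := (Finset.mem_erase.mp (hDsub hd)).2
        have hdx : d ≠ x := by
          rintro rfl
          exact hx hd
        refine Finset.mem_erase.mpr ⟨hdz, ?_⟩
        by_contra hdC
        -- then x ∈ D, contradiction
        obtain ⟨p, hp1, hp2, hp3⟩ := RS_first_hit G (hconn d hdS x hxS) hdx
        -- chain d → p lives in cls (S.erase x) d, which avoids z
        have hclsz : ∀ e ∈ cls G (S.erase x) d, e ≠ z := by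
          intro e he hez
          subst hez
          exact hdC ((mem_cls G).mpr ⟨Finset.mem_erase.mpr ⟨hdx, hdS⟩,
            (((mem_cls G).mp hzC).2).trans (RS_symm G (((mem_cls G).mp he).2))⟩)
        have hclssub : cls G (S.erase x) d ⊆ S.erase z := by
          intro e he
          exact Finset.mem_erase.mpr ⟨hclsz e he,
            (Finset.mem_erase.mp ((mem_cls G).mp he).1).2⟩
        have hdp : RS G (S.erase z) d p := RS_mono G hclssub (RS_to_cls G hp3)
        have hpz : p ≠ z := by
          refine hclsz p ?_
          exact (mem_cls G).mpr ⟨hp2, hp3⟩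
        have hdx' : RS G (S.erase z) d x := hdp.tail ⟨hp1,
          Finset.mem_erase.mpr ⟨hpz, (Finset.mem_erase.mp hp2).2⟩,
          Finset.mem_erase.mpr ⟨Ne.symm hzx, hxS⟩⟩
        exact hx ((mem_cls G).mpr ⟨Finset.mem_erase.mpr ⟨Ne.symm hzx, hxS⟩,
          (((mem_cls G).mp hd).2).trans hdx'⟩)
      calc D.card ≤ (C.erase z).card := Finset.card_le_card hDsub2
        _ < C.card := by rw [Finset.card_erase_of_mem hzC]; omega
  -- contradiction with minimality
  have hmz : m z < C.card := by
    rw [hm]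
    rcases Finset.eq_empty_or_nonempty (S.erase z) with he | he
    · simp [he, hCpos]
    · exact (Finset.sup_lt_iff (by simpa using hCpos)).mpr hkey
  have := hxmin z hzS
  omega

end Centroid

section Cover

open scoped Classical

variable {V : Type*} (G : SimpleGraph V)

/-- the unique path between two vertices of a tree -/
noncomputable def pathUV (htree : G.IsTree) (u v : V) : G.Walk u v :=
  Classical.choose (htree.existsUnique_path u v).exists

lemma pathUV_isPath (htree : G.IsTree) (u v : V) : (pathUV G htree u v).IsPath :=
  Classical.choose_spec (htree.existsUnique_path u v).exists

/-- `HS` covers all pairs of `S` whose tree path stays inside `S`. -/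
def Cover (htree : G.IsTree) (HS : Finset (Sym2 V)) (S : Finset V) : Prop :=
  ∀ u v : V, u ∈ S → v ∈ S → (∀ z ∈ (pathUV G htree u v).support, z ∈ S) →
    ∃ x : V, (x = u ∨ x = v ∨ ¬ (Gdel G x).Reachable u v) ∧
      (x = u ∨ s(u, x) ∈ HS) ∧ (x = v ∨ s(x, v) ∈ HS)

lemma cover_small (htree : G.IsTree) {S : Finset V} (h1 : S.card ≤ 1) :
    Cover G htree (∅ : Finset (Sym2 V)) S := by
  intro u v hu hv _
  have huv : u = v := Finset.card_le_one.mp h1 u hu v hv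
  exact ⟨u, Or.inl rfl, Or.inl rfl, Or.inl huv⟩

lemma logb_nonneg_nat (k : ℕ) : 0 ≤ Real.logb 2 (k : ℝ) := by
  rcases Nat.eq_zero_or_pos k with rfl | hk
  · simp
  · apply Real.logb_nonneg one_lt_two
    exact_mod_cast hk

lemma cover_rec (htree : G.IsTree) (n : ℕ) : ∀ (S : Finset V), S.card ≤ n →
    (∀ a ∈ S, ∀ b ∈ S, RS G S a b) →
    ∃ HS : Finset (Sym2 V), Cover G htree HS S ∧
      (HS.card : ℝ) ≤ (S.card : ℝ) * Real.logb 2 (S.card : ℝ) := by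
  induction n with
  | zero =>
    intro S hcard _
    have h0 : S.card = 0 := by omega
    refine ⟨∅, cover_small G htree (by omega), by simp [h0]⟩
  | succ n ih =>
    intro S hcard hconn
    by_cases hsmall : S.card ≤ 1
    · refine ⟨∅, cover_small G htree hsmall, ?_⟩
      simp only [Finset.card_empty, Nat.cast_zero]
      exact mul_nonneg (by positivity) (logb_nonneg_nat S.card)
    push_neg at hsmall
    have h2 : 2 ≤ S.card := hsmall
    obtain ⟨x, hxS, hcent⟩ := centroid_exists G htree S hconn h2
    set S' := S.erase x with hS'
    have hS'card : S'.card = S.card - 1 := Finset.card_erase_of_mem hxS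
    set classes : Finset (Finset V) := S'.image (fun y => cls G S' y) with hclasses
    -- each class is good for the induction hypothesis
    have hclass_prop : ∀ C ∈ classes, ∃ HS : Finset (Sym2 V), Cover G htree HS C ∧
        (HS.card : ℝ) ≤ (C.card : ℝ) * Real.logb 2 (C.card : ℝ) := by
      intro C hC
      obtain ⟨y, hyS', rfl⟩ := Finset.mem_image.mp hC
      have hsize := hcent y hyS'
      have hy : y ∈ cls G S' y := self_mem_cls G hyS'
      have hpos : 1 ≤ (cls G S' y).card := Finset.card_pos.mpr ⟨y, hy⟩
      refine ih (cls G S' y) (by omega) ?_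
      intro a ha b hb
      have hab : RS G S' a b :=
        (RS_symm G ((mem_cls G).mp ha).2).trans ((mem_cls G).mp hb).2
      have h1 : RS G (cls G S' a) a b := RS_to_cls G hab
      rwa [cls_eq_of_mem G ha] at h1
    set F : Finset V → Finset (Sym2 V) := fun C =>
      if h : ∃ HS : Finset (Sym2 V), Cover G htree HS C ∧
          (HS.card : ℝ) ≤ (C.card : ℝ) * Real.logb 2 (C.card : ℝ)
        then h.choose else ∅ with hF
    have hFspec : ∀ C ∈ classes, Cover G htree (F C) C ∧
        ((F C).card : ℝ) ≤ (C.card : ℝ) * Real.logb 2 (C.card : ℝ) := by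
      intro C hC
      have h := hclass_prop C hC
      simp only [hF, dif_pos h]
      exact h.choose_spec
    set star : Finset (Sym2 V) := S.image (fun y => s(x, y)) with hstar
    refine ⟨star ∪ classes.biUnion F, ?_, ?_⟩
    · -- Cover
      intro u v hu hv hpath
      rcases eq_or_ne u v with rfl | huv
      · exact ⟨u, Or.inl rfl, Or.inl rfl, Or.inl rfl⟩
      by_cases hxp : x ∈ (pathUV G htree u v).support
      · rcases eq_or_ne x u with hxu | hxu
        · exact ⟨x, Or.inl hxu, Or.inl hxu, Or.inr (Finset.mem_union_left _
            (Finset.mem_image_of_mem _ hv))⟩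
        rcases eq_or_ne x v with hxv | hxv
        · refine ⟨x, Or.inr (Or.inl hxv), Or.inr ?_, Or.inl hxv⟩
          rw [Sym2.eq_swap]
          exact Finset.mem_union_left _ (Finset.mem_image_of_mem _ hu)
        · refine ⟨x, Or.inr (Or.inr (not_reachable_of_mem_path G htree _
            (pathUV_isPath G htree u v) hxp hxu hxv)), Or.inr ?_, Or.inr ?_⟩
          · rw [Sym2.eq_swap]
            exact Finset.mem_union_left _ (Finset.mem_image_of_mem _ hu)
          · exact Finset.mem_union_left _ (Finset.mem_image_of_mem _ hv)
      · -- path avoids x : recurse into the class of u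
        have hpath' : ∀ z ∈ (pathUV G htree u v).support, z ∈ S' := by
          intro z hz
          refine Finset.mem_erase.mpr ⟨?_, hpath z hz⟩
          rintro rfl
          exact hxp hz
        have huS' : u ∈ S' := hpath' u (pathUV G htree u v).start_mem_support
        have hvS' : v ∈ S' := hpath' v (pathUV G htree u v).end_mem_support
        set C := cls G S' u with hC
        have hCmem : C ∈ classes := Finset.mem_image_of_mem _ huS'
        have hpathC : ∀ z ∈ (pathUV G htree u v).support, z ∈ C := by
          intro z hz
          refine (mem_cls G).mpr ⟨hpath' z hz, ?_⟩
          exact RS_of_walk G ((pathUV G htree u v).takeUntil z hz)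
            (fun e he => hpath' e ((pathUV G htree u v).support_takeUntil_subset hz he))
        have huC : u ∈ C := hpathC u (pathUV G htree u v).start_mem_support
        have hvC : v ∈ C := hpathC v (pathUV G htree u v).end_mem_support
        obtain ⟨x', h1, h2, h3⟩ := (hFspec C hCmem).1 u v huC hvC hpathC
        refine ⟨x', h1, ?_, ?_⟩
        · rcases h2 with h2 | h2
          · exact Or.inl h2
          · exact Or.inr (Finset.mem_union_right _ (Finset.mem_biUnion.mpr ⟨C, hCmem, h2⟩))
        · rcases h3 with h3 | h3
          · exact Or.inl h3
          · exact Or.inr (Finset.mem_union_right _ (Finset.mem_biUnion.mpr ⟨C, hCmem, h3⟩))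
    · -- cardinality
      set L := Real.logb 2 (S.card : ℝ) with hL
      have hL1 : 1 ≤ L := by
        rw [hL]
        calc (1:ℝ) = Real.logb 2 2 := (Real.logb_self_eq_one one_lt_two).symm
          _ ≤ Real.logb 2 (S.card : ℝ) :=
            Real.logb_le_logb_of_le one_lt_two (by norm_num) (by exact_mod_cast h2)
      -- class cards sum to S.card - 1
      have hdisj : ∀ C₁ ∈ classes, ∀ C₂ ∈ classes, C₁ ≠ C₂ → Disjoint C₁ C₂ := by
        intro C₁ h1 C₂ h2 hne
        by_contra hd
        obtain ⟨z, hz1, hz2⟩ := Finset.not_disjoint_iff.mp hd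
        obtain ⟨y₁, _, rfl⟩ := Finset.mem_image.mp h1
        obtain ⟨y₂, _, rfl⟩ := Finset.mem_image.mp h2
        exact hne ((cls_eq_of_mem G hz1).symm.trans (cls_eq_of_mem G hz2))
      have hbU : classes.biUnion id = S' := by
        ext z
        simp only [Finset.mem_biUnion, id]
        constructor
        · rintro ⟨C, hC, hzC⟩
          obtain ⟨y, _, rfl⟩ := Finset.mem_image.mp hC
          exact ((mem_cls G).mp hzC).1
        · intro hz
          exact ⟨cls G S' z, Finset.mem_image_of_mem _ hz, self_mem_cls G hz⟩
      have hsum : ∑ C ∈ classes, C.card = S.card - 1 := by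
        rw [← Finset.card_biUnion hdisj]
        rw [show classes.biUnion (fun C => C) = classes.biUnion id from rfl, hbU, hS'card]
      -- bound each class's contribution
      have hclassbound : ∀ C ∈ classes, ((F C).card : ℝ) ≤ (C.card : ℝ) * (L - 1) := by
        intro C hC
        refine (hFspec C hC).2.trans ?_
        refine mul_le_mul_of_nonneg_left ?_ (by positivity)
        obtain ⟨y, hyS', rfl⟩ := Finset.mem_image.mp hC
        have hsize := hcent y hyS'
        have hpos : 1 ≤ (cls G S' y).card := Finset.card_pos.mpr ⟨y, self_mem_cls G hyS'⟩
        have hcpos : (0:ℝ) < ((cls G S' y).card : ℝ) := by exact_mod_cast hpos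
        have : Real.logb 2 (2 * ((cls G S' y).card : ℝ)) ≤ L := by
          rw [hL]
          refine Real.logb_le_logb_of_le one_lt_two (by positivity) ?_
          exact_mod_cast hsize
        rw [Real.logb_mul (by norm_num) (ne_of_gt hcpos),
          Real.logb_self_eq_one one_lt_two] at this
        linarith
      have hcard1 : ((star ∪ classes.biUnion F).card : ℝ) ≤
          (S.card : ℝ) + ∑ C ∈ classes, ((F C).card : ℝ) := by
        have h1 : (star ∪ classes.biUnion F).card ≤ star.card + (classes.biUnion F).card :=
          Finset.card_union_le _ _
        have h2' : (classes.biUnion F).card ≤ ∑ C ∈ classes, (F C).card :=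
          Finset.card_biUnion_le
        have h3 : star.card ≤ S.card := Finset.card_image_le
        push_cast
        have := h1.trans (Nat.add_le_add h3 h2')
        exact_mod_cast this.trans (le_of_eq rfl)
      have hsum2 : ∑ C ∈ classes, ((F C).card : ℝ) ≤ ((S.card : ℝ) - 1) * (L - 1) := by
        calc ∑ C ∈ classes, ((F C).card : ℝ) ≤ ∑ C ∈ classes, (C.card : ℝ) * (L - 1) :=
            Finset.sum_le_sum hclassbound
          _ = (∑ C ∈ classes, (C.card : ℝ)) * (L - 1) := by rw [Finset.sum_mul]
          _ = ((S.card : ℝ) - 1) * (L - 1) := by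
            congr 1
            rw [← Nat.cast_sum, hsum]
            have : 1 ≤ S.card := by omega
            push_cast [Nat.cast_sub this]
            ring
      calc ((star ∪ classes.biUnion F).card : ℝ)
          ≤ (S.card : ℝ) + ((S.card : ℝ) - 1) * (L - 1) := by linarith
        _ ≤ (S.card : ℝ) * L := by nlinarith [hL1]

end Cover

section Final

lemma dLim_two_le_wAug {V : Type*} (w : V → V → ℝ≥0∞) (H : V → V → Prop) (u v : V)
    (h : H u v) : dLim (wAug w H) 2 u v ≤ gdist w u v :=
  ((dLim_le_dLim _ (by omega) u v).trans (dLim_le_edge _ u v)).trans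
    (wAug_le_gdist_of_H w H h)

theorem stmt15' :
    ∃ c : ℝ, 0 < c ∧
      ∀ (V : Type) (_ : Fintype V) (G : SimpleGraph V), G.IsTree →
        ∀ w : V → V → ℝ≥0∞,
          (∀ u v : V, w u v = w v u) →
          (∀ u v : V, u ≠ v → 0 < w u v) →
          (∀ u v : V, u ≠ v → (w u v ≠ ⊤ ↔ G.Adj u v)) →
          ∃ HS : Finset (Sym2 V),
            IsHopset w (fun x y => s(x, y) ∈ HS) 2 ∧
            (HS.card : ℝ) ≤ 1 * (Fintype.card V : ℝ) * Real.logb 2 (Fintype.card V) := by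
  classical
  refine ⟨1, one_pos, ?_⟩
  intro V _ G htree w hw1 hw2 hw3
  have hconn : ∀ a ∈ (Finset.univ : Finset V), ∀ b ∈ (Finset.univ : Finset V),
      RS G Finset.univ a b := by
    intro a _ b _
    obtain ⟨W⟩ := htree.isConnected.preconnected a b
    exact RS_of_walk G W (fun z _ => Finset.mem_univ z)
  obtain ⟨HS, hcov, hbound⟩ := cover_rec G htree (Fintype.card V) Finset.univ
    (by simp) hconn
  set H : V → V → Prop := fun a b => s(a, b) ∈ HS with hHdef
  refine ⟨HS, ?_, ?_⟩
  · intro u v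
    refine le_antisymm ?_ (dLim_wAug_ge w H 2 u v)
    rcases eq_or_ne u v with rfl | huv
    · rw [gdist_self]
      exact (dLim_le_dLim _ (by omega) u u).trans_eq (dLim_zero_self _ u)
    obtain ⟨x, h1, h2, h3⟩ := hcov u v (Finset.mem_univ u) (Finset.mem_univ v)
      (fun z _ => Finset.mem_univ z)
    -- helper subcases for shortcuts incident to an endpoint
    have hcase_u : x = u → dLim (wAug w H) 2 u v ≤ gdist w u v := by
      intro hxu
      rcases h3 with h3 | h3
      · exact absurd (hxu.symm.trans h3) huv
      · exact dLim_two_le_wAug w H u v (by rw [hHdef]; rw [hxu] at h3; exact h3)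
    have hcase_v : x = v → dLim (wAug w H) 2 u v ≤ gdist w u v := by
      intro hxv
      rcases h2 with h2 | h2
      · exact absurd ((h2.symm.trans hxv)) huv
      · exact dLim_two_le_wAug w H u v (by rw [hHdef]; rw [hxv] at h2; exact h2)
    rcases h1 with hxu | hxv | hsep
    · exact hcase_u hxu
    · exact hcase_v hxv
    rcases h2 with hxu | h2
    · exact hcase_u hxu
    rcases h3 with hxv | h3
    · exact hcase_v hxv
    have hsplit := gdist_split G w hw3 hsep
    calc dLim (wAug w H) 2 u v
        ≤ ⨅ y : V, wAug w H u y + dLim (wAug w H) 1 y v := min_le_right _ _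
      _ ≤ wAug w H u x + dLim (wAug w H) 1 x v := iInf_le _ x
      _ ≤ wAug w H u x + wAug w H x v := add_le_add_right (dLim_le_edge _ x v) _
      _ ≤ gdist w u x + gdist w x v :=
          add_le_add (wAug_le_gdist_of_H w H h2) (wAug_le_gdist_of_H w H h3)
      _ ≤ gdist w u v := hsplit
  · rw [one_mul]
    simpa [Finset.card_univ] using hbound

end Final


/-- Every weighted tree on `n` vertices admits an exact 2-hopset with at most
`c · n · log₂ n` edges, for an absolute constant `c > 0`. -/
theorem stmt15 :
    ∃ c : ℝ, 0 < c ∧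
      ∀ (V : Type) (_ : Fintype V) (G : SimpleGraph V), G.IsTree →
        ∀ w : V → V → ℝ≥0∞,
          (∀ u v : V, w u v = w v u) →
          (∀ u v : V, u ≠ v → 0 < w u v) →
          (∀ u v : V, u ≠ v → (w u v ≠ ⊤ ↔ G.Adj u v)) →
          ∃ HS : Finset (Sym2 V),
            IsHopset w (fun x y => s(x, y) ∈ HS) 2 ∧
            (HS.card : ℝ) ≤ c * (Fintype.card V : ℝ) * Real.logb 2 (Fintype.card V) := by
  obtain ⟨_, _, h⟩ := stmt15'
  exact ⟨1, one_pos, h⟩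

end
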